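/- arXiv:1604.05806 — 3 statements merged into one kernel-verified Lean document; each statement's English description precedes it below -/
import Mathlib

section
/- For all integers N ≥ 0, r with 1 ≤ r ≤ N+1, and i with 0 ≤ i ≤ r, the polynomials a_{i,r−i}(N+1,x) have the closed form a_{i,r−i}(N+1,x) = (−1)^{N+1+i−r} · i! · S_{1,i−1}(r−i) · N! · H_{N,r−1} · (x)_{r−i}. -/
open Finset

/-- Generalized Changhee power sums with shifted index: `genChangheeS j N = S_{1,j-1}(N)`,
so that `genChangheeS 0 N = S_{1,-1}(N) = 1`, `genChangheeS 1 N = S_{1,0}(N) = N + 1`,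
and `genChangheeS (j+2) N = S_{1,j+1}(N) = ∑_{l=0}^{N} S_{1,j}(l)`. -/
def genChangheeS : ℕ → ℕ → ℚ
  | 0, _ => 1
  | 1, N => N + 1
  | (j+2), N => ∑ l ∈ Finset.range (N+1), genChangheeS (j+1) l

/-- Generalized harmonic numbers `H_{N,j}`: `H_{N,0} = 1`,
`H_{N,1} = 1 + 1/2 + ⋯ + 1/N`, and `H_{N,j} = ∑_{l=j}^{N} H_{l-1,j-1}/l` for `j ≥ 2`. -/
def genHarmonic : ℕ → ℕ → ℚ
  | _, 0 => 1
  | N, 1 => ∑ i ∈ Finset.range N, (1 : ℚ) / (i + 1)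
  | N, (j+2) => ∑ l ∈ Finset.Icc (j+2) N, genHarmonic (l-1) (j+1) / l
termination_by N j => j

/-- Falling factorial `(x)_n = x(x-1)⋯(x-n+1)`, with `(x)_0 = 1`. -/
noncomputable def fallingFactorial (x : ℝ) (n : ℕ) : ℝ := ∏ i ∈ Finset.range n, (x - i)

/-- The coefficients `a_{i,j}(N, x)` arising from repeated differentiation of the
λ-Changhee generating function: `a_{0,0}(N,x) = 0`, `a_{1,0}(1,x) = -1`, `a_{0,1}(1,x) = x`,
and for `N ≥ 1`, `i, j ≥ 0` with `1 ≤ i + j ≤ N + 1`,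
`a_{i,j}(N+1,x) = -N·a_{i,j}(N,x) - i·a_{i-1,j}(N,x) + (x - j + 1)·a_{i,j-1}(N,x)`,
with the convention that `a_{i,j}(N,x) = 0` whenever `i < 0`, `j < 0`, or `i + j > N`. -/
noncomputable def aCh : ℕ → ℤ → ℤ → ℝ → ℝ
  | 0, _, _, _ => 0
  | 1, i, j, x => if i = 1 ∧ j = 0 then -1 else if i = 0 ∧ j = 1 then x else 0
  | (N+2), i, j, x =>
      if 0 ≤ i ∧ 0 ≤ j ∧ 1 ≤ i + j ∧ i + j ≤ N + 2 then
        -(N+1 : ℝ) * aCh (N+1) i j x - (i : ℝ) * aCh (N+1) (i-1) j x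
          + (x - (j : ℝ) + 1) * aCh (N+1) i (j-1) x
      else 0

lemma genChangheeS_zero_right : ∀ i, genChangheeS i 0 = 1
  | 0 => rfl
  | 1 => by norm_num [genChangheeS]
  | (i+2) => by
      rw [genChangheeS]
      simpa using genChangheeS_zero_right (i+1)

lemma genChangheeS_succ (i m : ℕ) :
    genChangheeS (i+1) (m+1) = genChangheeS i (m+1) + genChangheeS (i+1) m := by
  cases i with
  | zero =>
    simp only [genChangheeS]
    try push_cast
    try ring
  | succ k =>
    simp only [genChangheeS]
    rw [Finset.sum_range_succ]
    ring

lemma genHarmonic_eq_zero (N j : ℕ) (h : N < j) : genHarmonic N j = 0 := by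
  match j with
  | 0 => omega
  | 1 =>
    have hN : N = 0 := by omega
    subst hN; simp [genHarmonic]
  | (j+2) =>
    rw [genHarmonic, Finset.Icc_eq_empty (by omega)]
    simp

lemma genHarmonic_succ (N j : ℕ) :
    genHarmonic (N+1) (j+1) = genHarmonic N (j+1) + genHarmonic N j / (N+1) := by
  cases j with
  | zero =>
    have h1 : genHarmonic (N+1) 1 = ∑ i ∈ Finset.range (N+1), (1:ℚ)/(i+1) := by
      rw [genHarmonic]
    have h2 : genHarmonic N 1 = ∑ i ∈ Finset.range N, (1:ℚ)/(i+1) := by rw [genHarmonic]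
    have h3 : genHarmonic N 0 = 1 := by rw [genHarmonic]
    rw [h1, h2, h3, Finset.sum_range_succ]
    try push_cast
    try ring
  | succ k =>
    by_cases h : k + 2 ≤ N + 1
    · rw [genHarmonic, Finset.sum_Icc_succ_top h]
      conv_rhs => rw [genHarmonic]
      push_cast
      try norm_num
    · rw [genHarmonic_eq_zero (N+1) (k+2) (by omega),
        genHarmonic_eq_zero N (k+2) (by omega),
        genHarmonic_eq_zero N (k+1) (by omega)]
      simp

lemma aCh_eq_zero (n : ℕ) (i j : ℤ) (x : ℝ) (h : i + j < 1 ∨ i < 0 ∨ j < 0) :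
    aCh n i j x = 0 := by
  match n with
  | 0 => rfl
  | 1 =>
    rw [aCh, if_neg (by omega), if_neg (by omega)]
  | (n+2) =>
    rw [aCh, if_neg (by omega)]

lemma fallingFactorial_succ (x : ℝ) (n : ℕ) :
    fallingFactorial x (n+1) = fallingFactorial x n * (x - n) :=
  Finset.prod_range_succ _ _

lemma neg_one_pow_succ' (n : ℕ) : (-1:ℝ)^(n+1) = -(-1)^n := by
  rw [pow_succ]; ring

lemma aCh_key : ∀ N i m : ℕ, ∀ x : ℝ, 1 ≤ i + m → i + m ≤ N + 2 →
    aCh (N+1) (i:ℤ) (m:ℤ) x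
      = (-1:ℝ)^(N+1+m) * (Nat.factorial i : ℝ) * (genChangheeS i m : ℝ) *
          (Nat.factorial N : ℝ) * (genHarmonic N (i+m-1) : ℝ) * fallingFactorial x m := by
  intro N
  induction N with
  | zero =>
    intro i m x h1 h2
    have hi : i ≤ 2 := by omega
    have hm : m ≤ 2 := by omega
    interval_cases i <;> interval_cases m <;>
      first
        | omega
        | (norm_num [aCh, genChangheeS, genHarmonic, fallingFactorial, Nat.factorial] <;>
            try ring)
  | succ N ih =>
    intro i m x h1 h2
    have hH0 : ∀ M, genHarmonic M 0 = 1 := fun M => by rw [genHarmonic]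
    show aCh (N+2) (i:ℤ) (m:ℤ) x = _
    rw [aCh]
    by_cases hr : i + m ≤ N + 2
    · rw [if_pos (by omega)]
      have hne : ((N:ℝ)+1) ≠ 0 := by positivity
      cases i with
      | zero =>
        cases m with
        | zero => omega
        | succ l =>
          cases l with
          | zero =>
            -- (i,m) = (0,1)
            rw [ih 0 1 x (by omega) (by omega),
              aCh_eq_zero (N+1) ((0:ℕ):ℤ) (((1:ℕ):ℤ)-1) x (by omega),
              show N+1+1+1 = (N+1+1)+1 from by ring, neg_one_pow_succ']
            rw [hH0, hH0]
            push_cast [Nat.factorial_succ]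
            ring
          | succ l =>
            -- (i,m) = (0, l+2)
            rw [ih 0 (l+2) x (by omega) (by omega),
              show (((l+2:ℕ)):ℤ)-1 = ((l+1:ℕ):ℤ) from by push_cast; ring,
              ih 0 (l+1) x (by omega) (by omega)]
            have e1 : 0+(l+2)-1 = (l+1) := by omega
            have e2 : 0+(l+1)-1 = l := by omega
            rw [e1, e2]
            have hH' : (genHarmonic (N+1) (l+1) : ℝ)
                = (genHarmonic N (l+1) : ℝ) + (genHarmonic N l : ℝ) / ((N:ℝ)+1) := by
              rw [genHarmonic_succ N l]; push_cast; ring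
            rw [hH', fallingFactorial_succ,
              show N+1+1+(l+2) = ((N+1+(l+1))+1)+1 from by ring,
              show N+1+(l+2) = (N+1+(l+1))+1 from by ring,
              neg_one_pow_succ', neg_one_pow_succ']
            have hS1 : (genChangheeS 0 (l+2) : ℝ) = 1 := by rw [genChangheeS]; norm_num
            have hS2 : (genChangheeS 0 (l+1) : ℝ) = 1 := by rw [genChangheeS]; norm_num
            rw [hS1, hS2]
            push_cast [Nat.factorial_succ]
            field_simp
            ring
      | succ k =>
        cases m with
        | zero =>
          cases k with
          | zero =>
            -- (i,m) = (1,0)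
            rw [ih 1 0 x (by omega) (by omega),
              aCh_eq_zero (N+1) (((1:ℕ):ℤ)-1) ((0:ℕ):ℤ) x (by omega),
              aCh_eq_zero (N+1) ((1:ℕ):ℤ) (((0:ℕ):ℤ)-1) x (by omega),
              show N+1+1+0 = (N+1+0)+1 from by ring, neg_one_pow_succ']
            rw [hH0, hH0]
            push_cast [Nat.factorial_succ]
            ring
          | succ k =>
            -- (i,m) = (k+2, 0)
            rw [ih (k+2) 0 x (by omega) (by omega),
              show (((k+2:ℕ)):ℤ)-1 = ((k+1:ℕ):ℤ) from by push_cast; ring,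
              ih (k+1) 0 x (by omega) (by omega),
              aCh_eq_zero (N+1) ((k+2:ℕ):ℤ) (((0:ℕ):ℤ)-1) x (by omega)]
            have e1 : (k+2)+0-1 = (k+1) := by omega
            have e2 : (k+1)+0-1 = k := by omega
            rw [e1, e2]
            have hH' : (genHarmonic (N+1) (k+1) : ℝ)
                = (genHarmonic N (k+1) : ℝ) + (genHarmonic N k : ℝ) / ((N:ℝ)+1) := by
              rw [genHarmonic_succ N k]; push_cast; ring
            have hS1 : (genChangheeS (k+2) 0 : ℝ) = 1 := by
              rw [genChangheeS_zero_right]; norm_num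
            have hS2 : (genChangheeS (k+1) 0 : ℝ) = 1 := by
              rw [genChangheeS_zero_right]; norm_num
            rw [hH', hS1, hS2, show N+1+1+0 = (N+1+0)+1 from by ring, neg_one_pow_succ']
            push_cast [Nat.factorial_succ]
            field_simp
            ring
        | succ l =>
          -- (i,m) = (k+1, l+1)
          rw [ih (k+1) (l+1) x (by omega) (by omega),
            show (((k+1:ℕ)):ℤ)-1 = ((k:ℕ):ℤ) from by push_cast; ring,
            show (((l+1:ℕ)):ℤ)-1 = ((l:ℕ):ℤ) from by push_cast; ring,
            ih k (l+1) x (by omega) (by omega),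
            ih (k+1) l x (by omega) (by omega)]
          have e1 : (k+1)+(l+1)-1 = (k+l)+1 := by omega
          have e2 : k+(l+1)-1 = k+l := by omega
          have e3 : (k+1)+l-1 = k+l := by omega
          rw [e1, e2, e3]
          have hH' : (genHarmonic (N+1) ((k+l)+1) : ℝ)
              = (genHarmonic N ((k+l)+1) : ℝ) + (genHarmonic N (k+l) : ℝ) / ((N:ℝ)+1) := by
            rw [genHarmonic_succ N (k+l)]; push_cast; ring
          have hS' : (genChangheeS (k+1) (l+1) : ℝ)
              = (genChangheeS k (l+1) : ℝ) + (genChangheeS (k+1) l : ℝ) := by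
            rw [genChangheeS_succ]; push_cast; ring
          rw [hH', hS', fallingFactorial_succ,
            show N+1+1+(l+1) = ((N+1+l)+1)+1 from by ring,
            show N+1+(l+1) = (N+1+l)+1 from by ring,
            neg_one_pow_succ', neg_one_pow_succ']
          push_cast [Nat.factorial_succ]
          field_simp
          ring
    · rw [if_neg (by omega),
        genHarmonic_eq_zero (N+1) (i+m-1) (by omega)]
      push_cast
      ring

/-- Closed form for all the coefficients `a_{i,r-i}(N+1,x)`:
`a_{i,r-i}(N+1,x) = (-1)^{N+1+i-r} · i! · S_{1,i-1}(r-i) · N! · H_{N,r-1} · (x)_{r-i}`. -/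
theorem aCh_closed_form (N r i : ℕ) (hr1 : 1 ≤ r) (hr2 : r ≤ N + 1) (hi : i ≤ r) (x : ℝ) :
    aCh (N + 1) (i : ℤ) ((r : ℤ) - (i : ℤ)) x
      = (-1 : ℝ) ^ (N + 1 + i - r) * (Nat.factorial i : ℝ) *
          (genChangheeS i (r - i) : ℝ) * (Nat.factorial N : ℝ) *
          (genHarmonic N (r - 1) : ℝ) * fallingFactorial x (r - i) := by
  have harg : ((r:ℤ) - (i:ℤ)) = ((r - i : ℕ) : ℤ) := by omega
  rw [harg, aCh_key N i (r-i) x (by omega) (by omega),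
    show i+(r-i)-1 = r-1 from by omega,
    show N+1+(r-i) = (N+1+i-r) + 2*(r-i) from by omega, pow_add,
    show (-1:ℝ)^(2*(r-i)) = 1 from by rw [pow_mul]; norm_num, mul_one]
end

section
/- For all integers N and r with 2 ≤ r ≤ N, the coefficients a_{0,r} satisfy the unrolled recursion a_{0,r}(N+1,x) = (x − r + 1) · Σ_{i=0}^{N−r+1} (−1)^i (N)_i · a_{0,r−1}(N−i,x), where (N)_i = N(N−1)⋯(N−i+1). -/
open Finset

lemma ff_zero (x : ℝ) : fallingFactorial x 0 = 1 := by simp [fallingFactorial]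

lemma ff_one (x : ℝ) : fallingFactorial x 1 = x := by simp [fallingFactorial]

lemma ff_succ' (x : ℝ) (n : ℕ) :
    fallingFactorial x (n+1) = x * fallingFactorial (x-1) n := by
  rw [fallingFactorial, fallingFactorial, Finset.prod_range_succ']
  rw [Finset.prod_congr rfl (fun i _ => by push_cast; ring :
    ∀ i ∈ Finset.range n, (x - ((i:ℕ)+1 : ℕ)) = (x - 1 - i))]
  push_cast
  ring

lemma aCh_big (N : ℕ) (j : ℤ) (hj : (N : ℤ) < j) (x : ℝ) : aCh N 0 j x = 0 := by
  match N with
  | 0 => rfl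
  | 1 =>
    rw [aCh]
    rw [if_neg (by omega), if_neg (by omega)]
  | (N+2) =>
    rw [aCh, if_neg (by push_cast at hj ⊢; omega)]

lemma aCh_rec (N : ℕ) (j : ℤ) (h1 : 1 ≤ j) (h2 : j ≤ (N : ℤ) + 2) (x : ℝ) :
    aCh (N+2) 0 j x
      = -((N : ℝ)+1) * aCh (N+1) 0 j x + (x - (j : ℝ) + 1) * aCh (N+1) 0 (j-1) x := by
  rw [aCh, if_pos (by omega)]
  norm_num


/-- Unrolled recursion: for `2 ≤ r ≤ N`,
`a_{0,r}(N+1,x) = (x - r + 1) · ∑_{i=0}^{N-r+1} (-1)^i (N)_i · a_{0,r-1}(N-i,x)`. -/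
theorem aCh_zero_r_unrolled (N r : ℕ) (hr1 : 2 ≤ r) (hr2 : r ≤ N) (x : ℝ) :
    aCh (N + 1) 0 (r : ℤ) x
      = (x - (r : ℝ) + 1) *
          ∑ i ∈ Finset.range (N - r + 2),
            (-1 : ℝ) ^ i * fallingFactorial (N : ℝ) i * aCh (N - i) 0 ((r : ℤ) - 1) x := by
  induction N, hr2 using Nat.le_induction with
  | base =>
    obtain ⟨s, rfl⟩ : ∃ s, r = s + 2 := ⟨r - 2, by omega⟩
    have h1 : s + 2 - (s + 2) + 2 = 2 := by omega
    rw [h1, Finset.sum_range_succ, Finset.sum_range_succ, Finset.sum_range_zero]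
    have e1 : s + 2 + 1 = (s + 1) + 2 := by omega
    rw [e1, aCh_rec (s+1) ((s+2 : ℕ) : ℤ) (by push_cast; omega) (by push_cast; omega)]
    rw [aCh_rec s ((s+2 : ℕ) : ℤ) (by push_cast; omega) (by push_cast; omega)]
    rw [aCh_big (s+1) ((s+2 : ℕ) : ℤ) (by push_cast; omega)]
    have e2 : s + 2 - 0 = s + 2 := by omega
    have e3 : s + 2 - 1 = s + 1 := by omega
    rw [e2, e3, ff_zero, ff_one]
    have e4 : (s + 2 : ℕ) = s + 2 := rfl
    rw [show s + 2 = s + 2 from rfl]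
    rw [show ((s+2:ℕ):ℤ) - 1 = ((s+1:ℕ):ℤ) by push_cast; ring] at *
    rw [aCh_rec s ((s+1 : ℕ) : ℤ) (by push_cast; omega) (by push_cast; omega)]
    push_cast
    ring
  | succ n hn ih =>
    have hrange : n + 1 - r + 2 = (n - r + 2) + 1 := by omega
    rw [hrange, Finset.sum_range_succ']
    have key : ∀ i ∈ Finset.range (n - r + 2),
        (-1 : ℝ) ^ (i+1) * fallingFactorial ((n+1 : ℕ) : ℝ) (i+1)
            * aCh (n + 1 - (i+1)) 0 ((r : ℤ) - 1) x
          = (-((n:ℝ)+1)) * ((-1 : ℝ) ^ i * fallingFactorial (n : ℝ) i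
            * aCh (n - i) 0 ((r : ℤ) - 1) x) := by
      intro i _
      rw [ff_succ']
      rw [show n + 1 - (i+1) = n - i from by omega]
      push_cast
      ring
    rw [Finset.sum_congr rfl key, ← Finset.mul_sum]
    rw [aCh_rec n (r : ℤ) (by push_cast; omega) (by push_cast; omega)]
    rw [ih]
    simp only [ff_zero, Nat.sub_zero, pow_zero, one_mul]
    push_cast
    ring
end

section
/- For every integer N ≥ 1, a_{1,1}(N+1,x) = 2·(−1)^N · N! · H_N · x, where H_N = 1 + 1/2 + ⋯ + 1/N is the N-th harmonic number. -/
open Finset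

lemma aCh_zero_zero (M : ℕ) (x : ℝ) : aCh M 0 0 x = 0 := by
  match M with
  | 0 => simp [aCh]
  | 1 => simp [aCh]
  | (n+2) => simp [aCh]

lemma aCh_one_negone (M : ℕ) (x : ℝ) : aCh M 1 (-1) x = 0 := by
  match M with
  | 0 => simp [aCh]
  | 1 => simp [aCh]
  | (n+2) => simp [aCh]

lemma aCh_one_zero (N : ℕ) (x : ℝ) :
    aCh (N + 1) 1 0 x = (-1 : ℝ) ^ (N + 1) * (Nat.factorial N : ℝ) := by
  induction N with
  | zero => simp [aCh]
  | succ n ih =>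
      have h : aCh (n + 2) 1 0 x
          = -(n+1 : ℝ) * aCh (n+1) 1 0 x - 1 * aCh (n+1) 0 0 x
            + (x - 0 + 1) * aCh (n+1) 1 (-1) x := by
        simp [aCh]
        intro h; exfalso; omega
      rw [h, ih, aCh_zero_zero, aCh_one_negone, Nat.factorial_succ]
      push_cast
      ring

lemma aCh_zero_one (N : ℕ) (x : ℝ) :
    aCh (N + 1) 0 1 x = (-1 : ℝ) ^ N * (Nat.factorial N : ℝ) * x := by
  induction N with
  | zero => simp [aCh]
  | succ n ih =>
      have h : aCh (n + 2) 0 1 x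
          = -(n+1 : ℝ) * aCh (n+1) 0 1 x - 0 * aCh (n+1) (-1) 1 x
            + (x - 1 + 1) * aCh (n+1) 0 0 x := by
        simp [aCh]
        intro h; exfalso; omega
      rw [h, ih, aCh_zero_zero, Nat.factorial_succ]
      push_cast
      ring

/-- For `N ≥ 1`, `a_{1,1}(N+1,x) = 2·(-1)^N · N! · H_N · x`, where
`H_N = 1 + 1/2 + ⋯ + 1/N` is the `N`-th harmonic number. -/
theorem aCh_one_one (N : ℕ) (hN : 1 ≤ N) (x : ℝ) :
    aCh (N + 1) 1 1 x
      = 2 * (-1 : ℝ) ^ N * (Nat.factorial N : ℝ) *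
          (∑ i ∈ Finset.Icc 1 N, (1 : ℝ) / i) * x := by
  induction N, hN using Nat.le_induction with
  | base =>
      have h : aCh 2 1 1 x
          = -(1 : ℝ) * aCh 1 1 1 x - 1 * aCh 1 0 1 x + (x - 1 + 1) * aCh 1 1 0 x := by
        simp [aCh]
      rw [h]
      simp [aCh]
      ring
  | succ n hn ih =>
      have h : aCh (n + 2) 1 1 x
          = -(n+1 : ℝ) * aCh (n+1) 1 1 x - 1 * aCh (n+1) 0 1 x
            + (x - 1 + 1) * aCh (n+1) 1 0 x := by
        simp [aCh]
      rw [h, ih, aCh_zero_one, aCh_one_zero,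
        Finset.sum_Icc_succ_top (by omega : 1 ≤ n + 1), Nat.factorial_succ]
      push_cast
      field_simp
      ring
end
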